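/- Let μ ∈ ℍ be a pure unit quaternion (μ has zero real part and |μ| = 1, so μ² = −1). Let f : ℝ → ℍ with ∫_ℝ |f(x)| dx < ∞, and define 𝓕(w) = ∫_ℝ f(x) e^{−μ x w} dx. If ∫_ℝ |𝓕(w)| dw < ∞, then f(x) = (1/(2π)) ∫_ℝ 𝓕(w) e^{μ x w} dw for almost every x ∈ ℝ. -/

import Mathlib

open MeasureTheory Filter Real Set
open scoped Quaternion Topology
open Complex SchwartzMap
open scoped FourierTransform RealInnerProductSpace ContDiff

noncomputable section

def qi : ℍ[ℝ] := ⟨0,1,0,0⟩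
def qj : ℍ[ℝ] := ⟨0,0,1,0⟩

/-- `e^{μθ} = cos θ + μ sin θ` for a (pure unit) quaternion `μ`. -/
def qexp (μ : ℍ[ℝ]) (θ : ℝ) : ℍ[ℝ] := (Real.cos θ : ℍ[ℝ]) + Real.sin θ • μ

/-- One-dimensional quaternion Fourier transform with respect to a pure unit quaternion `μ`. -/
def QFT1 (μ : ℍ[ℝ]) (f : ℝ → ℍ[ℝ]) (w : ℝ) : ℍ[ℝ] :=
  ∫ x : ℝ, f x * qexp μ (-(x * w))


lemma exists_schwartz {f : ℝ → ℂ} (hf : ContDiff ℝ ∞ f) (h'f : HasCompactSupport f) :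
    ∃ g : SchwartzMap ℝ ℂ, ⇑g = f := by
  refine ⟨⟨f, hf, fun k n => ?_⟩, rfl⟩
  obtain ⟨x₀, hx₀⟩ := Continuous.exists_forall_ge_of_hasCompactSupport
    (f := fun x : ℝ => ‖x‖ ^ k * ‖iteratedFDeriv ℝ n f x‖)
    ((continuous_norm.pow k).mul (hf.continuous_iteratedFDeriv (by exact_mod_cast le_top)).norm) (((h'f.iteratedFDeriv n).comp_left norm_zero).mul_left)
  exact ⟨_, fun x => hx₀ x⟩

lemma ae_fourier_inversion {g : ℝ → ℂ} (hg : Integrable g) (hG : Integrable (𝓕 g)) :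
    ∀ᵐ x : ℝ, g x = 𝓕⁻ (𝓕 g) x := by
  have flip_eq : (innerₗ ℝ).flip = innerₗ ℝ :=
    LinearMap.ext fun x => LinearMap.ext fun y => real_inner_comm x y
  have hcont : Continuous (𝓕⁻ (𝓕 g)) := by
    apply VectorFourier.fourierIntegral_continuous Real.continuous_fourierChar
      (by exact (continuous_inner (𝕜 := ℝ) (E := ℝ)).neg) hG
  apply ae_eq_of_integral_contDiff_smul_eq hg.locallyIntegrable hcont.locallyIntegrable
  intro φ hφ hφc
  set φc : ℝ → ℂ := fun x => (φ x : ℂ) with hφcdef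
  set ψ : ℝ → ℂ := fun x => φc (-x) with hψdef
  have hψsm : ContDiff ℝ ∞ ψ :=
    (Complex.ofRealCLM.contDiff.comp hφ).comp contDiff_id.neg
  have hφcc : HasCompactSupport φc := hφc.comp_left Complex.ofReal_zero
  have hψc : HasCompactSupport ψ := hφcc.comp_homeomorph (Homeomorph.neg ℝ)
  obtain ⟨ψS, hψS⟩ := exists_schwartz hψsm hψc
  have hψInt : Integrable ψ := by
    have h : Integrable (⇑ψS) MeasureTheory.volume := ψS.integrable
    rwa [hψS] at h
  have hFψInt : Integrable (𝓕 ψ) := by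
    have h : Integrable (⇑((fourierTransformCLM ℂ) ψS)) MeasureTheory.volume :=
      ((fourierTransformCLM ℂ) ψS).integrable
    rwa [fourierTransformCLM_apply, SchwartzMap.fourier_coe, hψS] at h
  have hinv : ∀ x : ℝ, 𝓕 (𝓕 ψ) x = φc x := by
    intro x
    have := Real.fourierInv_eq_fourier_neg (𝓕 ψ) (-x)
    rw [neg_neg] at this
    rw [← this, hψInt.fourierInv_fourier_eq hFψInt (hψsm.continuous.continuousAt)]
    simp [hψdef]
  calc ∫ x, φ x • g x
      = ∫ x, g x • 𝓕 (𝓕 ψ) x := by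
        congr 1 with x
        rw [hinv x]
        simp [hφcdef, Complex.real_smul, mul_comm]
    _ = ∫ ξ, 𝓕 g ξ • 𝓕 ψ ξ := by
        have := VectorFourier.integral_fourierIntegral_smul_eq_flip
          (L := innerₗ ℝ) (f := g) (g := 𝓕 ψ) Real.continuous_fourierChar
          (by exact continuous_inner) hg hFψInt
        rw [flip_eq] at this
        exact this.symm
    _ = ∫ ξ, 𝓕 ψ ξ • 𝓕 g ξ := by
        congr 1 with ξ; simp [smul_eq_mul, mul_comm]
    _ = ∫ x, ψ x • 𝓕 (𝓕 g) x := by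
        have := VectorFourier.integral_fourierIntegral_smul_eq_flip
          (L := innerₗ ℝ) (f := ψ) (g := 𝓕 g) Real.continuous_fourierChar
          (by exact continuous_inner) hψInt hG
        rw [flip_eq] at this
        exact this
    _ = ∫ x, φ x • 𝓕⁻ (𝓕 g) x := by
        have h2 : (∫ x, φ x • 𝓕⁻ (𝓕 g) x) = ∫ x, ψ (-x) • 𝓕 (𝓕 g) (-x) := by
          congr 1 with x
          rw [Real.fourierInv_eq_fourier_neg]
          simp [hψdef, hφcdef, Complex.real_smul]
        have := Measure.integral_comp_mul_left (fun x => ψ x • 𝓕 (𝓕 g) x) (-1)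
        simp only [neg_one_mul] at this
        rw [h2, this]
        norm_num


lemma scalar_inversion (h : ℝ → ℂ) (hh : Integrable h)
    (hG : Integrable (fun w => ∫ x : ℝ, h x * Complex.exp ((-(x * w) : ℝ) * Complex.I))) :
    ∀ᵐ x : ℝ, h x = (1 / (2 * π)) •
      ∫ w : ℝ, (∫ y : ℝ, h y * Complex.exp ((-(y * w) : ℝ) * Complex.I))
        * Complex.exp (((x * w) : ℝ) * Complex.I) := by
  set G : ℝ → ℂ := fun w => ∫ x : ℝ, h x * Complex.exp ((-(x * w) : ℝ) * Complex.I) with hGdef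
  have key : ∀ u : ℝ, 𝓕 h u = G (2 * π * u) := by
    intro u
    rw [Real.fourier_real_eq, hGdef]
    congr 1 with v
    rw [Circle.smul_def, Real.fourierChar_apply]
    have : ((2 * π * -(v * u) : ℝ) : ℂ) * Complex.I
        = ((-(v * (2 * π * u)) : ℝ) : ℂ) * Complex.I := by push_cast; ring
    rw [this, smul_eq_mul]
    exact mul_comm _ _
  have hFh : Integrable (𝓕 h) := by
    have h2 : Integrable (fun u : ℝ => G (2 * π * u)) :=
      hG.comp_mul_left' (by positivity)
    apply h2.congr
    filter_upwards with u using (key u).symm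
  have hae := ae_fourier_inversion hh hFh
  filter_upwards [hae] with x hx
  rw [hx]
  have comp := Measure.integral_comp_mul_left
    (fun w => G w * Complex.exp (((x * w) : ℝ) * Complex.I)) (2 * π)
  have lhs_eq : (∫ u : ℝ, G (2 * π * u) * Complex.exp (((x * (2 * π * u)) : ℝ) * Complex.I))
      = 𝓕⁻ (𝓕 h) x := by
    rw [Real.fourierInv_eq]
    congr 1 with u
    rw [← key u, Circle.smul_def, Real.fourierChar_apply]
    have h1 : (inner ℝ u x : ℝ) = u * x := by simp [mul_comm]
    have : ((x * (2 * π * u) : ℝ) : ℂ) * Complex.I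
        = ((2 * π * (inner ℝ u x : ℝ) : ℝ) : ℂ) * Complex.I := by rw [h1]; push_cast; ring
    rw [this, smul_eq_mul]
    exact mul_comm _ _
  rw [lhs_eq] at comp
  rw [comp]
  have : |(2 * π)⁻¹| = 1 / (2 * π) := by
    rw [abs_of_pos (by positivity), one_div]
  rw [this]


section helpers

lemma integrable_mul_bdd {F : Type*} [NormedDivisionRing F] {f g : ℝ → F}
    (hf : Integrable f) (hg : AEStronglyMeasurable g volume)
    (C : ℝ) (hC : ∀ x, ‖g x‖ ≤ C) : Integrable (fun x => f x * g x) := by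
  refine (hf.norm.mul_const C).mono' (hf.1.mul hg) ?_
  filter_upwards with x
  rw [norm_mul]
  exact mul_le_mul_of_nonneg_left (hC x) (norm_nonneg _)

lemma qi_re : qi.re = 0 := rfl
lemma qi_imI : qi.imI = 1 := rfl
lemma qi_imJ : qi.imJ = 0 := rfl
lemma qi_imK : qi.imK = 0 := rfl
lemma qj_re : qj.re = 0 := rfl
lemma qj_imI : qj.imI = 0 := rfl
lemma qj_imJ : qj.imJ = 1 := rfl
lemma qj_imK : qj.imK = 0 := rfl

lemma qexp_comp (θ : ℝ) : qexp qi θ = (⟨Real.cos θ, Real.sin θ, 0, 0⟩ : ℍ[ℝ]) := by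
  ext <;> simp [qexp, qi_re, qi_imI, qi_imJ, qi_imK] <;> rfl

lemma norm_qexp_qi (θ : ℝ) : ‖qexp qi θ‖ = 1 := by
  have h1 : Quaternion.normSq (qexp qi θ) = 1 := by
    rw [Quaternion.normSq_def', qexp_comp]
    show Real.cos θ ^ 2 + Real.sin θ ^ 2 + 0 ^ 2 + 0 ^ 2 = 1
    nlinarith [Real.sin_sq_add_cos_sq θ]
  have h2 := Quaternion.normSq_eq_norm_mul_self (qexp qi θ)
  nlinarith [norm_nonneg (qexp qi θ)]

@[simp] lemma qexp_qi_re (θ : ℝ) : (qexp qi θ).re = Real.cos θ := by rw [qexp_comp]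
@[simp] lemma qexp_qi_imI (θ : ℝ) : (qexp qi θ).imI = Real.sin θ := by rw [qexp_comp]
@[simp] lemma qexp_qi_imJ (θ : ℝ) : (qexp qi θ).imJ = 0 := by rw [qexp_comp]
@[simp] lemma qexp_qi_imK (θ : ℝ) : (qexp qi θ).imK = 0 := by rw [qexp_comp]

lemma continuous_qexp_qi {g : ℝ → ℝ} (hg : Continuous g) :
    Continuous (fun x : ℝ => qexp qi (g x)) := by
  unfold qexp
  exact (Quaternion.continuous_coe.comp (Real.continuous_cos.comp hg)).add
    ((Real.continuous_sin.comp hg).smul continuous_const)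

lemma norm_cexp_I (t : ℝ) : ‖Complex.exp ((t : ℂ) * Complex.I)‖ = 1 := by
  rw [Complex.norm_exp_ofReal_mul_I]

lemma continuous_cexp_I (g : ℝ → ℝ) (hg : Continuous g) :
    Continuous (fun x : ℝ => Complex.exp ((g x : ℂ) * Complex.I)) :=
  Complex.continuous_exp.comp ((Complex.continuous_ofReal.comp hg).mul continuous_const)

end helpers

section linmaps

def embL : ℂ →ₗ[ℝ] ℍ[ℝ] where
  toFun z := ⟨z.re, z.im, 0, 0⟩
  map_add' z w := by ext <;> simp <;> erw [QuaternionAlgebra.mk_add_mk] <;> simp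
  map_smul' r z := by ext <;> simp <;> erw [QuaternionAlgebra.smul_mk] <;> simp

@[simp] lemma embL_re (z : ℂ) : (embL z).re = z.re := rfl
@[simp] lemma embL_imI (z : ℂ) : (embL z).imI = z.im := rfl
@[simp] lemma embL_imJ (z : ℂ) : (embL z).imJ = 0 := rfl
@[simp] lemma embL_imK (z : ℂ) : (embL z).imK = 0 := rfl

def AL : ℍ[ℝ] →ₗ[ℝ] ℂ where
  toFun q := ⟨q.re, q.imI⟩
  map_add' q r := by refine Complex.ext ?_ ?_ <;> simp
  map_smul' r q := by refine Complex.ext ?_ ?_ <;> simp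

def BL : ℍ[ℝ] →ₗ[ℝ] ℂ where
  toFun q := ⟨q.imJ, q.imK⟩
  map_add' q r := by refine Complex.ext ?_ ?_ <;> simp
  map_smul' r q := by refine Complex.ext ?_ ?_ <;> simp

def embC : ℂ →L[ℝ] ℍ[ℝ] := embL.toContinuousLinearMap
def AC : ℍ[ℝ] →L[ℝ] ℂ := AL.toContinuousLinearMap
def BC : ℍ[ℝ] →L[ℝ] ℂ := BL.toContinuousLinearMap
def mulqjC : ℍ[ℝ] →L[ℝ] ℍ[ℝ] := (LinearMap.mulRight ℝ qj).toContinuousLinearMap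

lemma decomp (x : ℍ[ℝ]) : x = embC (AC x) + mulqjC (embC (BC x)) := by
  ext <;> simp [embC, AC, BC, mulqjC, AL, BL, qj_re, qj_imI, qj_imJ, qj_imK, Quaternion.re_mul, Quaternion.imI_mul,
    Quaternion.imJ_mul, Quaternion.imK_mul]

lemma pointwise (x : ℍ[ℝ]) (θ : ℝ) :
    x * qexp qi θ = embC (AC x * Complex.exp ((θ : ℂ) * Complex.I))
      + mulqjC (embC (BC x * Complex.exp (((-θ : ℝ) : ℂ) * Complex.I))) := by
  ext <;>
    simp [embC, AC, BC, mulqjC, AL, BL, qj_re, qj_imI, qj_imJ, qj_imK, Quaternion.re_mul, Quaternion.imI_mul,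
      Quaternion.imJ_mul, Quaternion.imK_mul, Complex.mul_re, Complex.mul_im,
      Complex.exp_re, Complex.exp_im, Real.cos_neg, Real.sin_neg] <;>
    ring

lemma AC_parts (z w : ℂ) : AC (embC z + mulqjC (embC w)) = z := by
  refine Complex.ext ?_ ?_ <;> simp [embC, AC, BC, mulqjC, AL, BL, qj_re, qj_imI, qj_imJ, qj_imK, Quaternion.re_mul, Quaternion.imI_mul]

lemma BC_parts (z w : ℂ) : BC (embC z + mulqjC (embC w)) = w := by
  refine Complex.ext ?_ ?_ <;> simp [embC, AC, BC, mulqjC, AL, BL, qj_re, qj_imI, qj_imJ, qj_imK, Quaternion.imJ_mul, Quaternion.imK_mul]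

end linmaps

lemma integral_emb_pair {u v : ℝ → ℂ} (hu : Integrable u) (hv : Integrable v) :
    ∫ w : ℝ, (embC (u w) + mulqjC (embC (v w)))
      = embC (∫ w : ℝ, u w) + mulqjC (embC (∫ w : ℝ, v w)) := by
  rw [integral_add (embC.integrable_comp hu) (mulqjC.integrable_comp (embC.integrable_comp hv)),
    embC.integral_comp_comm hu, mulqjC.integral_comp_comm (embC.integrable_comp hv),
    embC.integral_comp_comm hv]

theorem inv_i (f : ℝ → ℍ[ℝ]) (hf : Integrable f) (hF : Integrable (QFT1 qi f)) :
    ∀ᵐ x : ℝ, f x = (1 / (2 * π)) • ∫ w : ℝ, QFT1 qi f w * qexp qi (x * w) := by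
  set gA : ℝ → ℂ := fun x => AC (f x) with hgAdef
  set gB : ℝ → ℂ := fun x => BC (f x) with hgBdef
  have hgA : Integrable gA := AC.integrable_comp hf
  have hgB : Integrable gB := BC.integrable_comp hf
  have measA : ∀ w : ℝ, Integrable (fun x : ℝ => gA x * Complex.exp (((-(x*w)) : ℝ) * Complex.I)) :=
    fun w => integrable_mul_bdd hgA ((continuous_cexp_I _ (by fun_prop)).aestronglyMeasurable) 1
      (fun x => le_of_eq (norm_cexp_I _))
  have measB : ∀ w : ℝ, Integrable (fun x : ℝ => gB x * Complex.exp (((x*w) : ℝ) * Complex.I)) :=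
    fun w => integrable_mul_bdd hgB ((continuous_cexp_I _ (by fun_prop)).aestronglyMeasurable) 1
      (fun x => le_of_eq (norm_cexp_I _))
  have hQ : ∀ w : ℝ, QFT1 qi f w
      = embC (∫ x : ℝ, gA x * Complex.exp (((-(x*w)) : ℝ) * Complex.I))
        + mulqjC (embC (∫ x : ℝ, gB x * Complex.exp (((x*w) : ℝ) * Complex.I))) := by
    intro w
    have hpt : ∀ x : ℝ, f x * qexp qi (-(x*w))
        = embC (gA x * Complex.exp (((-(x*w)) : ℝ) * Complex.I))
          + mulqjC (embC (gB x * Complex.exp (((x*w) : ℝ) * Complex.I))) := by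
      intro x
      have h := pointwise (f x) (-(x*w))
      rw [neg_neg] at h
      exact h
    rw [QFT1]
    calc ∫ x : ℝ, f x * qexp qi (-(x * w))
        = ∫ x : ℝ, (embC (gA x * Complex.exp (((-(x*w)) : ℝ) * Complex.I))
            + mulqjC (embC (gB x * Complex.exp (((x*w) : ℝ) * Complex.I)))) := by
          apply integral_congr_ae
          filter_upwards with x using hpt x
      _ = _ := integral_emb_pair (measA w) (measB w)
  have hAQ : ∀ w : ℝ, AC (QFT1 qi f w)
      = ∫ x : ℝ, gA x * Complex.exp (((-(x*w)) : ℝ) * Complex.I) := by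
    intro w; rw [hQ w, AC_parts]
  have hBQ : ∀ w : ℝ, BC (QFT1 qi f w)
      = ∫ x : ℝ, gB x * Complex.exp (((x*w) : ℝ) * Complex.I) := by
    intro w; rw [hQ w, BC_parts]
  have hGA : Integrable (fun w : ℝ => ∫ x : ℝ, gA x * Complex.exp (((-(x*w)) : ℝ) * Complex.I)) := by
    apply (AC.integrable_comp hF).congr
    filter_upwards with w using hAQ w
  have hGB : Integrable (fun w : ℝ => ∫ x : ℝ, gB x * Complex.exp (((x*w) : ℝ) * Complex.I)) := by
    apply (BC.integrable_comp hF).congr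
    filter_upwards with w using hBQ w
  have hGBneg : Integrable (fun w : ℝ => ∫ x : ℝ, gB x * Complex.exp (((-(x*w)) : ℝ) * Complex.I)) := by
    have h2 := hGB.comp_mul_left' (R := -1) (by norm_num)
    apply h2.congr
    filter_upwards with w
    congr 1 with x
    norm_num
  have IA := scalar_inversion gA hgA hGA
  have IB := scalar_inversion gB hgB hGBneg
  filter_upwards [IA, IB] with x hA hB
  -- B-side integral transformation
  have hBtrans : (∫ w : ℝ, (∫ y : ℝ, gB y * Complex.exp (((y*w) : ℝ) * Complex.I))
        * Complex.exp (((-(x*w)) : ℝ) * Complex.I))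
      = ∫ w : ℝ, (∫ y : ℝ, gB y * Complex.exp (((-(y*w)) : ℝ) * Complex.I))
        * Complex.exp (((x*w) : ℝ) * Complex.I) := by
    have h3 := Measure.integral_comp_mul_left
      (fun w : ℝ => (∫ y : ℝ, gB y * Complex.exp (((y*w) : ℝ) * Complex.I))
        * Complex.exp (((-(x*w)) : ℝ) * Complex.I)) (-1)
    simp only [neg_one_mul, inv_neg, inv_one, abs_neg, abs_one, one_smul] at h3
    rw [← h3]
    congr 1 with w
    congr 1
    · congr 1 with y
      norm_num
    · norm_num
  -- main computation
  have hmain : (∫ w : ℝ, QFT1 qi f w * qexp qi (x * w))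
      = embC (∫ w : ℝ, (∫ y : ℝ, gA y * Complex.exp (((-(y*w)) : ℝ) * Complex.I))
          * Complex.exp (((x*w) : ℝ) * Complex.I))
        + mulqjC (embC (∫ w : ℝ, (∫ y : ℝ, gB y * Complex.exp (((y*w) : ℝ) * Complex.I))
          * Complex.exp (((-(x*w)) : ℝ) * Complex.I))) := by
    calc ∫ w : ℝ, QFT1 qi f w * qexp qi (x * w)
        = ∫ w : ℝ, (embC ((∫ y : ℝ, gA y * Complex.exp (((-(y*w)) : ℝ) * Complex.I))
              * Complex.exp (((x*w) : ℝ) * Complex.I))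
            + mulqjC (embC ((∫ y : ℝ, gB y * Complex.exp (((y*w) : ℝ) * Complex.I))
              * Complex.exp (((-(x*w)) : ℝ) * Complex.I)))) := by
          apply integral_congr_ae
          filter_upwards with w
          have h := pointwise (QFT1 qi f w) (x*w)
          rw [hAQ w, hBQ w] at h
          exact h
      _ = _ := by
          apply integral_emb_pair
          · exact integrable_mul_bdd hGA ((continuous_cexp_I _ (by fun_prop)).aestronglyMeasurable) 1
              (fun w => le_of_eq (norm_cexp_I _))
          · exact integrable_mul_bdd hGB ((continuous_cexp_I _ (by fun_prop)).aestronglyMeasurable) 1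
              (fun w => le_of_eq (norm_cexp_I _))
  calc f x = embC (gA x) + mulqjC (embC (gB x)) := decomp (f x)
    _ = (1 / (2 * π)) • ∫ w : ℝ, QFT1 qi f w * qexp qi (x * w) := by
        rw [hA, hB, hmain, hBtrans, smul_add, ← embC.map_smul, ← mulqjC.map_smul,
          ← embC.map_smul]

lemma mu_sq (μ : ℍ[ℝ]) (hμre : μ.re = 0) (hμnorm : ‖μ‖ = 1) : μ * μ = -1 := by
  have h2 := Quaternion.normSq_eq_norm_mul_self μ
  rw [hμnorm, mul_one] at h2
  have h3 := Quaternion.normSq_def' μ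
  rw [h2, hμre] at h3
  ext <;>
    simp [Quaternion.re_mul, Quaternion.imI_mul, Quaternion.imJ_mul, Quaternion.imK_mul, hμre] <;>
    nlinarith [h3]

lemma qi_sq : qi * qi = (-1 : ℍ[ℝ]) := by
  ext <;> simp [qi_re, qi_imI, qi_imJ, qi_imK, Quaternion.re_mul, Quaternion.imI_mul, Quaternion.imJ_mul, Quaternion.imK_mul]

lemma exists_conj (μ : ℍ[ℝ]) (hμre : μ.re = 0) (hμnorm : ‖μ‖ = 1) :
    ∃ q : ℍ[ℝ], q ≠ 0 ∧ q * qi = μ * q := by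
  by_cases hc : μ = -qi
  · refine ⟨qj, ?_, ?_⟩
    · intro h
      have := congrArg QuaternionAlgebra.imJ h
      simp [qj_imJ] at this
    · subst hc
      ext <;> simp [qi_re, qi_imI, qi_imJ, qi_imK, qj_re, qj_imI, qj_imJ, qj_imK, Quaternion.re_mul, Quaternion.imI_mul, Quaternion.imJ_mul,
        Quaternion.imK_mul]
  · refine ⟨qi + μ, ?_, ?_⟩
    · intro h
      exact hc (eq_neg_of_add_eq_zero_right h)
    · rw [add_mul, mul_add, qi_sq, mu_sq μ hμre hμnorm, add_comm]

/-- 1D inversion theorem: an integrable `f : ℝ → ℍ` with integrable `μ`-Fourier transform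
is recovered a.e. from it. -/
theorem qft_1d_inversion
    (μ : ℍ[ℝ]) (hμre : μ.re = 0) (hμnorm : ‖μ‖ = 1)
    (f : ℝ → ℍ[ℝ]) (hf : Integrable f)
    (hF : Integrable (QFT1 μ f)) :
    ∀ᵐ x : ℝ, f x = (1 / (2 * π)) • ∫ w : ℝ, QFT1 μ f w * qexp μ (x * w) := by
  obtain ⟨q, hq0, hqi⟩ := exists_conj μ hμre hμnorm
  have hqexp : ∀ θ : ℝ, q * qexp qi θ = qexp μ θ * q := by
    intro θ
    simp only [qexp, mul_add, add_mul]
    congr 1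
    · exact (Quaternion.coe_commutes _ q).symm
    · rw [mul_smul_comm, smul_mul_assoc, hqi]
  set L2 : ℍ[ℝ] →L[ℝ] ℍ[ℝ] :=
    ((LinearMap.mulRight ℝ q⁻¹).comp (LinearMap.mulLeft ℝ q)).toContinuousLinearMap with hL2def
  set L1 : ℍ[ℝ] →L[ℝ] ℍ[ℝ] :=
    ((LinearMap.mulRight ℝ q).comp (LinearMap.mulLeft ℝ q⁻¹)).toContinuousLinearMap with hL1def
  have hL2app : ∀ x : ℍ[ℝ], L2 x = q * x * q⁻¹ := fun x => rfl
  have hL1app : ∀ x : ℍ[ℝ], L1 x = q⁻¹ * x * q := fun x => rfl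
  set g : ℝ → ℍ[ℝ] := fun x => L1 (f x) with hgdef
  have hgapp : ∀ x, g x = q⁻¹ * f x * q := fun x => rfl
  have hfg : ∀ x, q * g x * q⁻¹ = f x := by
    intro x
    rw [hgapp]
    simp [mul_assoc, mul_inv_cancel_left₀ hq0, inv_mul_cancel_left₀ hq0,
      mul_inv_cancel₀ hq0, inv_mul_cancel₀ hq0]
  have hconj : ∀ (a : ℍ[ℝ]) (θ : ℝ), q * (a * qexp qi θ) * q⁻¹ = (q * a * q⁻¹) * qexp μ θ := by
    intro a θ
    have h1 : qexp qi θ * q⁻¹ = q⁻¹ * qexp μ θ := by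
      calc qexp qi θ * q⁻¹ = q⁻¹ * (q * qexp qi θ) * q⁻¹ := by
            rw [inv_mul_cancel_left₀ hq0]
        _ = q⁻¹ * (qexp μ θ * q) * q⁻¹ := by rw [hqexp]
        _ = q⁻¹ * qexp μ θ := by
            rw [mul_assoc, mul_assoc, mul_inv_cancel₀ hq0, mul_one]
    calc q * (a * qexp qi θ) * q⁻¹ = (q * a) * (qexp qi θ * q⁻¹) := by
          noncomm_ring
      _ = (q * a) * (q⁻¹ * qexp μ θ) := by rw [h1]
      _ = (q * a * q⁻¹) * qexp μ θ := by noncomm_ring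
  have hg_int : Integrable g := L1.integrable_comp hf
  have hQrel : ∀ w : ℝ, QFT1 μ f w = L2 (QFT1 qi g w) := by
    intro w
    have hint : Integrable (fun x : ℝ => g x * qexp qi (-(x * w))) :=
      integrable_mul_bdd hg_int ((continuous_qexp_qi (by fun_prop)).aestronglyMeasurable) 1
        (fun x => le_of_eq (norm_qexp_qi _))
    rw [QFT1, QFT1, ← L2.integral_comp_comm hint]
    apply integral_congr_ae
    filter_upwards with x
    rw [hL2app, hconj (g x), hfg x]
  have hQg_int : Integrable (QFT1 qi g) := by
    have h5 := L1.integrable_comp hF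
    apply h5.congr
    filter_upwards with w
    rw [hQrel w, hL1app, hL2app]
    simp [mul_assoc, mul_inv_cancel_left₀ hq0, inv_mul_cancel_left₀ hq0,
      mul_inv_cancel₀ hq0, inv_mul_cancel₀ hq0]
  have main := inv_i g hg_int hQg_int
  filter_upwards [main] with x hx
  have hint2 : Integrable (fun w : ℝ => QFT1 qi g w * qexp qi (x * w)) :=
    integrable_mul_bdd hQg_int ((continuous_qexp_qi (by fun_prop)).aestronglyMeasurable) 1
      (fun w => le_of_eq (norm_qexp_qi _))
  calc f x = q * g x * q⁻¹ := (hfg x).symm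
    _ = (1 / (2 * π)) • (q * (∫ w : ℝ, QFT1 qi g w * qexp qi (x * w)) * q⁻¹) := by
        rw [hx, mul_smul_comm, smul_mul_assoc]
    _ = (1 / (2 * π)) • ∫ w : ℝ, QFT1 μ f w * qexp μ (x * w) := by
        congr 1
        rw [show q * (∫ w : ℝ, QFT1 qi g w * qexp qi (x * w)) * q⁻¹
            = L2 (∫ w : ℝ, QFT1 qi g w * qexp qi (x * w)) from rfl,
          ← L2.integral_comp_comm hint2]
        apply integral_congr_ae
        filter_upwards with w
        rw [hL2app, hconj (QFT1 qi g w), ← hL2app, ← hQrel w]
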